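/- Let σ, β > 0 and let ζ be a centered real Gaussian random variable with variance σ/β. Then for every 2π-periodic function F: ℝ → ℝ with F̂(0) = 0 and ‖F‖ < ∞, the function G(φ) := 𝔼[F(φ+ζ)] is 2π-periodic with Ĝ(0) = 0 and satisfies ‖G‖ ≤ e^{−σ/(2β)} ‖F‖. -/

import Mathlib

open MeasureTheory Real

/-- Fourier coefficient `F̂(q) = (2π)⁻¹ ∫_0^{2π} F(φ) e^{iqφ} dφ` of a `2π`-periodic `F`. -/
noncomputable def fCoef (F : ℝ → ℝ) (q : ℤ) : ℂ :=
  (2 * Real.pi : ℂ)⁻¹ *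
    ∫ φ in (0 : ℝ)..(2 * Real.pi), (F φ : ℂ) * Complex.exp ((q : ℂ) * (φ : ℂ) * Complex.I)

/-- The norm `‖F‖ = Σ_{q∈ℤ} (1+|q|)² |F̂(q)|`. -/
noncomputable def pnorm (F : ℝ → ℝ) : ℝ :=
  ∑' q : ℤ, (1 + |(q : ℝ)|) ^ 2 * ‖fCoef F q‖

/-- Summability of the weighted Fourier coefficients of `F`, i.e. `‖F‖ < ∞`. -/
def pSummable (F : ℝ → ℝ) : Prop :=
  Summable fun q : ℤ => (1 + |(q : ℝ)|) ^ 2 * ‖fCoef F q‖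

/-- `F` with its zero Fourier mode subtracted: `F - F̂(0)`. -/
noncomputable def centered (F : ℝ → ℝ) : ℝ → ℝ := fun φ => F φ - (fCoef F 0).re

/-- Gaussian smoothing: `G(φ) = 𝔼[F(φ+ζ)]` with `ζ` centered Gaussian of variance `v`. -/
noncomputable def gaussSmooth (v : ℝ) (F : ℝ → ℝ) (φ : ℝ) : ℝ :=
  ∫ z : ℝ, F (φ + z) ∂(ProbabilityTheory.gaussianReal 0 (Real.toNNReal v))

lemma gauss_char {v : ℝ} (hv : 0 < v) (t : ℝ) :
    ∫ z : ℝ, Complex.exp ((t : ℂ) * z * Complex.I)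
        ∂(ProbabilityTheory.gaussianReal 0 (Real.toNNReal v))
      = Complex.exp (((-(v * t ^ 2) / 2 : ℝ) : ℂ)) := by
  have hvne : (Real.toNNReal v) ≠ 0 := by
    simp [Real.toNNReal_eq_zero, not_le, hv]
  rw [ProbabilityTheory.gaussianReal_of_var_ne_zero 0 hvne]
  have hpdf : ProbabilityTheory.gaussianPDF 0 (Real.toNNReal v)
      = fun x => ((ProbabilityTheory.gaussianPDFReal 0 (Real.toNNReal v) x).toNNReal : ENNReal) := rfl
  rw [hpdf, integral_withDensity_eq_integral_smul
      ((ProbabilityTheory.measurable_gaussianPDFReal 0 _).real_toNNReal) _]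
  have hco : ((Real.toNNReal v : ℝ)) = v := Real.coe_toNNReal v hv.le
  have hA : (0:ℝ) < Real.sqrt (2 * Real.pi * v) := Real.sqrt_pos.mpr (by positivity)
  have hb : ((-(2*v)⁻¹ : ℝ) : ℂ).re < 0 := by
    simp only [Complex.ofReal_re]
    norm_num
    positivity
  have step1 : ∀ z : ℝ,
      ((ProbabilityTheory.gaussianPDFReal 0 (Real.toNNReal v) z).toNNReal : ℝ)
          • Complex.exp ((t : ℂ) * z * Complex.I)
        = ((Real.sqrt (2 * Real.pi * v))⁻¹ : ℂ) *
            Complex.exp (((-(2*v)⁻¹ : ℝ) : ℂ) * z ^ 2 + ((t : ℂ) * Complex.I) * z + 0) := by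
    intro z
    rw [Real.coe_toNNReal _ (ProbabilityTheory.gaussianPDFReal_nonneg _ _ _),
      ProbabilityTheory.gaussianPDFReal_def]
    simp only [hco, sub_zero]
    rw [Complex.real_smul]
    push_cast
    rw [mul_assoc, ← Complex.exp_add]
    congr 2
    have hv' : (v : ℂ) ≠ 0 := by exact_mod_cast hv.ne'
    field_simp
    ring
  simp_rw [NNReal.smul_def, step1]
  rw [integral_const_mul, integral_cexp_quadratic hb]
  have h1 : (↑Real.pi / -((-(2*v)⁻¹ : ℝ) : ℂ)) = ((2 * Real.pi * v : ℝ) : ℂ) := by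
    have hv' : (v : ℂ) ≠ 0 := by exact_mod_cast hv.ne'
    push_cast
    field_simp
  have h2 : (0 : ℂ) - ((t : ℂ) * Complex.I) ^ 2 / (4 * ((-(2*v)⁻¹ : ℝ) : ℂ))
      = ((-(v * t ^ 2) / 2 : ℝ) : ℂ) := by
    have hv' : (v : ℂ) ≠ 0 := by exact_mod_cast hv.ne'
    rw [mul_pow, Complex.I_sq]
    push_cast
    field_simp
    ring
  rw [h1, h2]
  have h3 : (((2 * Real.pi * v : ℝ) : ℂ)) ^ (1 / 2 : ℂ)
      = ((Real.sqrt (2 * Real.pi * v) : ℝ) : ℂ) := by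
    rw [Real.sqrt_eq_rpow, Complex.ofReal_cpow (by positivity)]
    norm_num
  rw [h3, ← mul_assoc, ← Complex.ofReal_inv, ← Complex.ofReal_mul,
    inv_mul_cancel₀ hA.ne', Complex.ofReal_one, one_mul]

lemma fCoef_gaussSmooth {v : ℝ} (hv : 0 < v) {F : ℝ → ℝ} (hFc : Continuous F)
    (hper : ∀ φ, F (φ + 2 * Real.pi) = F φ) (q : ℤ) :
    fCoef (gaussSmooth v F) q
      = Complex.exp (((-(v * (q : ℝ) ^ 2) / 2 : ℝ) : ℂ)) * fCoef F q := by
  set γ := ProbabilityTheory.gaussianReal 0 (Real.toNNReal v) with hγ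
  have h2π : (0 : ℝ) ≤ 2 * Real.pi := by positivity
  obtain ⟨M, hM⟩ : ∃ M, ∀ x, |F x| ≤ M := by
    obtain ⟨M, hM⟩ := (isCompact_Icc (a := (0:ℝ)) (b := 2 * Real.pi)).exists_bound_of_continuousOn
      hFc.continuousOn
    refine ⟨M, fun x => ?_⟩
    obtain ⟨y, hy, hxy⟩ := Function.Periodic.exists_mem_Ico₀ hper (by positivity) x
    rw [hxy]
    simpa using hM y ⟨hy.1, hy.2.le⟩
  set g : ℝ → ℂ := fun ψ => (F ψ : ℂ) * Complex.exp ((q : ℂ) * (ψ : ℂ) * Complex.I) with hg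
  set J : ℂ := ∫ φ in (0:ℝ)..(2 * Real.pi), g φ with hJ
  have hgper : Function.Periodic g (2 * Real.pi) := by
    intro ψ
    simp only [hg]
    rw [hper]
    congr 1
    have h1 : (q : ℂ) * ((ψ + 2 * Real.pi : ℝ) : ℂ) * Complex.I
        = (q : ℂ) * (ψ : ℂ) * Complex.I + (q : ℂ) * (2 * (Real.pi : ℂ) * Complex.I) := by
      push_cast; ring
    rw [h1, Complex.exp_add, Complex.exp_int_mul_two_pi_mul_I, mul_one]
  have hint : Integrable
      (Function.uncurry fun (φ z : ℝ) =>
        ((F (φ + z) : ℝ) : ℂ) * Complex.exp ((q : ℂ) * (φ : ℂ) * Complex.I))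
      ((volume.restrict (Set.Ioc 0 (2 * Real.pi))).prod γ) := by
    haveI : IsFiniteMeasure (volume.restrict (Set.Ioc (0:ℝ) (2 * Real.pi))) := by
      constructor
      simp [Real.volume_Ioc]
      exact ENNReal.mul_lt_top (by simp) ENNReal.ofReal_lt_top
    refine (integrable_const M).mono' ?_ ?_
    · apply Continuous.aestronglyMeasurable
      apply Continuous.mul
      · exact Complex.continuous_ofReal.comp (hFc.comp (continuous_fst.add continuous_snd))
      · exact Complex.continuous_exp.comp
          ((continuous_const.mul ((Complex.continuous_ofReal.comp continuous_fst))).mul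
            continuous_const)
    · refine ae_of_all _ fun p => ?_
      have h1 : ‖Complex.exp ((q : ℂ) * (p.1 : ℂ) * Complex.I)‖ = 1 := by
        have h2 : (q : ℂ) * (p.1 : ℂ) = (((q : ℝ) * p.1 : ℝ) : ℂ) := by push_cast; ring
        rw [h2, Complex.norm_exp_ofReal_mul_I]
      simp only [Function.uncurry, norm_mul, h1, mul_one, Complex.norm_real,
        Real.norm_eq_abs]
      exact hM _
  have inner : ∀ z : ℝ, (∫ φ in Set.Ioc (0:ℝ) (2 * Real.pi),
        ((F (φ + z) : ℝ) : ℂ) * Complex.exp ((q : ℂ) * (φ : ℂ) * Complex.I))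
      = Complex.exp (((-(q : ℝ) : ℝ) : ℂ) * (z : ℂ) * Complex.I) * J := by
    intro z
    rw [← intervalIntegral.integral_of_le h2π]
    have hstep : ∀ φ : ℝ, ((F (φ + z) : ℝ) : ℂ) * Complex.exp ((q : ℂ) * (φ : ℂ) * Complex.I)
        = Complex.exp (((-(q : ℝ) : ℝ) : ℂ) * (z : ℂ) * Complex.I) * g (φ + z) := by
      intro φ
      simp only [hg]
      have h3 : Complex.exp ((q : ℂ) * (φ : ℂ) * Complex.I)
          = Complex.exp (((-(q : ℝ) : ℝ) : ℂ) * (z : ℂ) * Complex.I) *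
              Complex.exp ((q : ℂ) * ((φ + z : ℝ) : ℂ) * Complex.I) := by
        rw [← Complex.exp_add]
        congr 1
        push_cast
        ring
      rw [h3]
      ring
    simp_rw [hstep]
    rw [intervalIntegral.integral_const_mul]
    congr 1
    rw [intervalIntegral.integral_comp_add_right g z, zero_add,
      show 2 * Real.pi + z = z + 2 * Real.pi from add_comm _ _,
      hgper.intervalIntegral_add_eq z 0, zero_add]
  have key : (∫ φ in (0:ℝ)..(2 * Real.pi),
        ((gaussSmooth v F φ : ℝ) : ℂ) * Complex.exp ((q : ℂ) * (φ : ℂ) * Complex.I))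
      = Complex.exp (((-(v * (q : ℝ) ^ 2) / 2 : ℝ) : ℂ)) * J := by
    have e1 : ∀ φ ∈ Set.uIcc (0:ℝ) (2 * Real.pi),
        ((gaussSmooth v F φ : ℝ) : ℂ) * Complex.exp ((q : ℂ) * (φ : ℂ) * Complex.I)
          = ∫ z, ((F (φ + z) : ℝ) : ℂ) * Complex.exp ((q : ℂ) * (φ : ℂ) * Complex.I) ∂γ := by
      intro φ _
      rw [gaussSmooth, ← hγ, show ((∫ z, F (φ + z) ∂γ : ℝ) : ℂ) = ∫ z, ((F (φ + z) : ℝ) : ℂ) ∂γ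
        from integral_ofReal.symm, ← integral_mul_const]
    rw [intervalIntegral.integral_congr e1, intervalIntegral.integral_of_le h2π,
      integral_integral_swap hint]
    simp_rw [inner]
    rw [integral_mul_const, gauss_char hv (-(q : ℝ))]
    congr 3
    ring
  rw [fCoef, key, fCoef, ← hJ]
  ring

theorem stmt18 (σv β : ℝ) (hσ : 0 < σv) (hβ : 0 < β)
    (F : ℝ → ℝ) (hFc : Continuous F) (hper : ∀ φ, F (φ + 2 * Real.pi) = F φ)
    (h0 : fCoef F 0 = 0) (hsum : pSummable F) :
    (∀ φ, gaussSmooth (σv / β) F (φ + 2 * Real.pi) = gaussSmooth (σv / β) F φ) ∧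
    fCoef (gaussSmooth (σv / β) F) 0 = 0 ∧
    pnorm (gaussSmooth (σv / β) F) ≤ Real.exp (- σv / (2 * β)) * pnorm F := by
  set v : ℝ := σv / β with hvdef
  have hv : 0 < v := div_pos hσ hβ
  refine ⟨?_, ?_, ?_⟩
  · intro φ
    simp only [gaussSmooth]
    refine integral_congr_ae (ae_of_all _ fun z => ?_)
    show F (φ + 2 * Real.pi + z) = F (φ + z)
    rw [show φ + 2 * Real.pi + z = (φ + z) + 2 * Real.pi by ring, hper]
  · rw [fCoef_gaussSmooth hv hFc hper 0, h0, mul_zero]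
  · have habs : ∀ q : ℤ, ‖fCoef (gaussSmooth v F) q‖
        = Real.exp (-(v * (q : ℝ) ^ 2) / 2) * ‖fCoef F q‖ := by
      intro q
      rw [fCoef_gaussSmooth hv hFc hper q, norm_mul, Complex.norm_exp_ofReal]
    have hbound : ∀ q : ℤ,
        (1 + |(q : ℝ)|) ^ 2 * ‖fCoef (gaussSmooth v F) q‖
          ≤ Real.exp (-v / 2) * ((1 + |(q : ℝ)|) ^ 2 * ‖fCoef F q‖) := by
      intro q
      rw [habs]
      rcases eq_or_ne q 0 with hq | hq
      · subst hq
        rw [h0]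
        simp
      · have hq1 : (1 : ℝ) ≤ (q : ℝ) ^ 2 := by
          have : (1 : ℤ) ≤ q ^ 2 := by
            rcases lt_or_gt_of_ne hq with h | h <;> nlinarith
          exact_mod_cast this
        have hexp : Real.exp (-(v * (q : ℝ) ^ 2) / 2) ≤ Real.exp (-v / 2) := by
          apply Real.exp_le_exp.mpr
          nlinarith
        have h1 : (0:ℝ) ≤ (1 + |(q : ℝ)|) ^ 2 := by positivity
        have h2 : (0:ℝ) ≤ ‖fCoef F q‖ := norm_nonneg _
        calc (1 + |(q : ℝ)|) ^ 2 * (Real.exp (-(v * (q : ℝ) ^ 2) / 2) * ‖fCoef F q‖)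
            ≤ (1 + |(q : ℝ)|) ^ 2 * (Real.exp (-v / 2) * ‖fCoef F q‖) := by
              apply mul_le_mul_of_nonneg_left (mul_le_mul_of_nonneg_right hexp h2) h1
          _ = Real.exp (-v / 2) * ((1 + |(q : ℝ)|) ^ 2 * ‖fCoef F q‖) := by ring
    have hsum2 : Summable fun q : ℤ =>
        Real.exp (-v / 2) * ((1 + |(q : ℝ)|) ^ 2 * ‖fCoef F q‖) :=
      hsum.mul_left _
    have hsum1 : Summable fun q : ℤ =>
        (1 + |(q : ℝ)|) ^ 2 * ‖fCoef (gaussSmooth v F) q‖ := by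
      refine Summable.of_nonneg_of_le (fun q => by positivity) hbound hsum2
    have := Summable.tsum_le_tsum hbound hsum1 hsum2
    rw [pnorm, pnorm]
    calc (∑' q : ℤ, (1 + |(q : ℝ)|) ^ 2 * ‖fCoef (gaussSmooth v F) q‖)
        ≤ ∑' q : ℤ, Real.exp (-v / 2) * ((1 + |(q : ℝ)|) ^ 2 * ‖fCoef F q‖) := this
      _ = Real.exp (-v / 2) * ∑' q : ℤ, (1 + |(q : ℝ)|) ^ 2 * ‖fCoef F q‖ :=
          tsum_mul_left
      _ = Real.exp (- σv / (2 * β)) * ∑' q : ℤ, (1 + |(q : ℝ)|) ^ 2 * ‖fCoef F q‖ := by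
          congr 2
          rw [hvdef, neg_div, neg_div, div_div, mul_comm]
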